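/- Let k be an algebraically closed field of characteristic 0, ζ ∈ k a primitive 3rd root of unity, and c ∈ k a nonzero scalar. Let the 3×3 braiding matrix be q_{11} = −1, q_{12} = −c²ζ, q_{13} = −c⁻³, q_{21} = −c⁻², q_{22} = −1, q_{23} = c, q_{31} = −c³, q_{32} = −c⁻¹ζ, q_{33} = −1 (type ufo(4), fourth Weyl-groupoid object). Then for every λ ∈ k, the quotient of the free algebra k⟨y_1,y_2,y_3⟩ by the two-sided ideal generated by y_1², y_2², y_3², y_{13}, and [[y_{32}, y_{321}]_c, y_2]_c − λ is a nontrivial algebra. -/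

import Mathlib

/-- The `q`-bilinear form `q(α,β) = ∏ i j, (q i j) ^ (α i * β j)` on `ℕⁿ`-degrees. -/
noncomputable def qForm {k : Type*} [Field k] {n : ℕ} (q : Fin n → Fin n → k)
    (α β : Fin n → ℕ) : k :=
  ∏ i : Fin n, ∏ j : Fin n, q i j ^ (α i * β j)

/-- The braided commutator on pairs (homogeneous element, its `ℕⁿ`-degree):
`[u,v]_c = u v − q(deg u, deg v) v u`. -/
noncomputable def bc {k : Type*} [Field k] {n : ℕ} (q : Fin n → Fin n → k)
    (u v : FreeAlgebra k (Fin n) × (Fin n → ℕ)) :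
    FreeAlgebra k (Fin n) × (Fin n → ℕ) :=
  (u.1 * v.1 - qForm q u.2 v.2 • (v.1 * u.1), fun i => u.2 i + v.2 i)

/-- The generator `y i` of the free algebra, together with its degree `e_i`. -/
noncomputable def ygen (k : Type*) [Field k] {n : ℕ} (i : Fin n) :
    FreeAlgebra k (Fin n) × (Fin n → ℕ) :=
  (FreeAlgebra.ι k i, fun j => if j = i then 1 else 0)


theorem statement_17 {k : Type*} [Field k] [IsAlgClosed k] [CharZero k]
    (ζ : k) (hζ : IsPrimitiveRoot ζ 3) (c : k) (hc : c ≠ 0)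
    (lam : k)
    (q : Fin 3 → Fin 3 → k) (hq : q = ![![-1, -c ^ 2 * ζ, -(c ^ 3)⁻¹], ![-(c ^ 2)⁻¹, -1, c], ![-c ^ 3, -c⁻¹ * ζ, -1]]) :
    (1 : FreeAlgebra k (Fin 3)) ∉ TwoSidedIdeal.span
      ({FreeAlgebra.ι k (0 : Fin 3) ^ 2,
        FreeAlgebra.ι k (1 : Fin 3) ^ 2,
        FreeAlgebra.ι k (2 : Fin 3) ^ 2,
        (bc q (ygen k 0) (ygen k 2)).1,
        (bc q (bc q (bc q (ygen k 2) (ygen k 1)) (bc q (ygen k 2) (bc q (ygen k 1) (ygen k 0)))) (ygen k 1)).1 - algebraMap k (FreeAlgebra k (Fin 3)) lam} : Set (FreeAlgebra k (Fin 3))) := by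
  intro hmem
  have h3 : ζ ^ 3 = 1 := hζ.pow_eq_one
  have hζ1 : ζ ≠ 1 := hζ.ne_one (by norm_num)
  have hz : ζ ^ 2 + ζ + 1 = 0 := by
    rcases mul_eq_zero.1 (show (ζ - 1) * (ζ ^ 2 + ζ + 1) = 0 by linear_combination h3) with h | h
    · exact absurd (sub_eq_zero.1 h) hζ1
    · exact h
  set μ : k := lam * (1 + 2 * ζ) / 3 with hμ
  set Y : Fin 3 → Matrix (Fin 2) (Fin 2) k := ![!![0,0;μ,0], !![0,1;0,0], !![0,0;1,0]] with hY
  set φ : FreeAlgebra k (Fin 3) →ₐ[k] Matrix (Fin 2) (Fin 2) k := FreeAlgebra.lift k Y with hφ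
  have e0 : φ (FreeAlgebra.ι k (0 : Fin 3)) = !![0,0;μ,0] := by
    rw [hφ, FreeAlgebra.lift_ι_apply]; rfl
  have e1 : φ (FreeAlgebra.ι k (1 : Fin 3)) = !![0,1;0,0] := by
    rw [hφ, FreeAlgebra.lift_ι_apply]; rfl
  have e2 : φ (FreeAlgebra.ι k (2 : Fin 3)) = !![0,0;1,0] := by
    rw [hφ, FreeAlgebra.lift_ι_apply]; rfl
  -- the five generators are in the kernel
  have r0 : φ (FreeAlgebra.ι k (0 : Fin 3) ^ 2) = 0 := by
    rw [map_pow, e0]; ext i j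
    fin_cases i <;> fin_cases j <;> simp [pow_two, Matrix.mul_apply, Fin.sum_univ_two]
  have r1 : φ (FreeAlgebra.ι k (1 : Fin 3) ^ 2) = 0 := by
    rw [map_pow, e1]; ext i j
    fin_cases i <;> fin_cases j <;> simp [pow_two, Matrix.mul_apply, Fin.sum_univ_two]
  have r2 : φ (FreeAlgebra.ι k (2 : Fin 3) ^ 2) = 0 := by
    rw [map_pow, e2]; ext i j
    fin_cases i <;> fin_cases j <;> simp [pow_two, Matrix.mul_apply, Fin.sum_univ_two]
  have r3 : φ ((bc q (ygen k 0) (ygen k 2)).1) = 0 := by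
    simp only [bc, ygen, map_sub, map_mul, map_smul, e0, e2]
    ext i j
    fin_cases i <;> fin_cases j <;>
      simp [Matrix.mul_apply, Fin.sum_univ_two, Matrix.smul_apply]
  have hA : φ ((bc q (ygen k 2) (ygen k 1)).1) = !![c⁻¹ * ζ, 0; 0, 1] := by
    simp only [bc, ygen, map_sub, map_mul, map_smul, e1, e2]
    subst hq
    ext i j
    fin_cases i <;> fin_cases j <;>
      simp [qForm, Fin.prod_univ_three, Matrix.mul_apply, Fin.sum_univ_two, Matrix.smul_apply]
  have bc_fst : ∀ u v : FreeAlgebra k (Fin 3) × (Fin 3 → ℕ),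
      (bc q u v).1 = u.1 * v.1 - qForm q u.2 v.2 • (v.1 * u.1) := fun _ _ => rfl
  have hC : φ ((bc q (ygen k 2) (bc q (ygen k 1) (ygen k 0))).1) = !![0,0; μ*(1-ζ), 0] := by
    simp only [bc, ygen, map_sub, map_mul, map_smul, e0, e1, e2]
    subst hq
    ext i j
    fin_cases i <;> fin_cases j <;>
      simp [qForm, Fin.prod_univ_three, Matrix.mul_apply, Fin.sum_univ_two, Matrix.smul_apply] <;>
      field_simp <;> ring
  have hD : φ ((bc q (bc q (ygen k 2) (ygen k 1)) (bc q (ygen k 2) (bc q (ygen k 1) (ygen k 0)))).1)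
      = !![0,0; μ*(1-ζ)*(1+ζ^2), 0] := by
    rw [bc_fst, map_sub]
    simp only [map_mul, map_smul]
    rw [hA, hC]
    have hs : qForm q (bc q (ygen k 2) (ygen k 1)).2 (bc q (ygen k 2) (bc q (ygen k 1) (ygen k 0))).2
        = -(c*ζ) := by
      subst hq; simp [bc, ygen, qForm, Fin.prod_univ_three]; field_simp
    rw [hs]
    ext i j
    fin_cases i <;> fin_cases j <;>
      simp [Matrix.mul_apply, Fin.sum_univ_two, Matrix.smul_apply] <;>
      field_simp <;> ring
  have r4 : φ ((bc q (bc q (bc q (ygen k 2) (ygen k 1)) (bc q (ygen k 2) (bc q (ygen k 1) (ygen k 0)))) (ygen k 1)).1 - algebraMap k (FreeAlgebra k (Fin 3)) lam) = 0 := by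
    rw [map_sub, AlgHom.commutes, bc_fst,
      show (ygen k (1:Fin 3)).1 = FreeAlgebra.ι k 1 from rfl, map_sub]
    simp only [map_mul, map_smul]
    rw [hD, e1]
    have hs : qForm q (bc q (bc q (ygen k 2) (ygen k 1)) (bc q (ygen k 2) (bc q (ygen k 1) (ygen k 0)))).2 (ygen k 1).2 = -1 := by
      subst hq; simp [bc, ygen, qForm, Fin.prod_univ_three]
      field_simp
      linear_combination h3
    rw [hs]
    ext i j
    fin_cases i <;> fin_cases j <;>
      simp [Matrix.mul_apply, Fin.sum_univ_two, Matrix.smul_apply, Matrix.one_apply,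
        Algebra.algebraMap_eq_smul_one] <;>
      linear_combination ((1-ζ)*(1+ζ^2))*hμ + (lam*(-2*ζ^2+3*ζ-2)/3)*hz
  have hsub : ({FreeAlgebra.ι k (0 : Fin 3) ^ 2,
        FreeAlgebra.ι k (1 : Fin 3) ^ 2,
        FreeAlgebra.ι k (2 : Fin 3) ^ 2,
        (bc q (ygen k 0) (ygen k 2)).1,
        (bc q (bc q (bc q (ygen k 2) (ygen k 1)) (bc q (ygen k 2) (bc q (ygen k 1) (ygen k 0)))) (ygen k 1)).1 - algebraMap k (FreeAlgebra k (Fin 3)) lam} : Set (FreeAlgebra k (Fin 3)))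
      ⊆ (TwoSidedIdeal.ker φ : Set (FreeAlgebra k (Fin 3))) := by
    intro x hx
    simp only [Set.mem_insert_iff, Set.mem_singleton_iff] at hx
    rcases hx with rfl | rfl | rfl | rfl | rfl <;>
      simp only [SetLike.mem_coe, TwoSidedIdeal.mem_ker] <;> assumption
  have h1 : (1 : FreeAlgebra k (Fin 3)) ∈ TwoSidedIdeal.ker φ :=
    TwoSidedIdeal.mem_span_iff.1 hmem _ hsub
  rw [TwoSidedIdeal.mem_ker, map_one] at h1
  exact one_ne_zero h1
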